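/- Let W = {w_1, …, w_k} be a witness set in an x-monotone polygon M with x(w_1) < x(w_2) < … < x(w_k), and let w be a point of M with x(w_i) < x(w) < x(w_{i+1}) for some 1 ≤ i < k. If Vis(w) ∩ Vis(w_i) = ∅ and Vis(w) ∩ Vis(w_{i+1}) = ∅, then W ∪ {w} is a witness set in M. -/

import Mathlib

def Vis (M : Set (ℝ × ℝ)) (x : ℝ × ℝ) : Set (ℝ × ℝ) :=
  {z ∈ M | segment ℝ x z ⊆ M}

/-- A segment contained in `M` meets a vertical line between its endpoints at a point
seeing both endpoints. -/
lemma exists_on_segment (M : Set (ℝ × ℝ)) (u v : ℝ × ℝ)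
    (hseg : segment ℝ u v ⊆ M)
    (c : ℝ) (h1 : u.1 < c) (h2 : c < v.1) :
    ∃ q, q ∈ M ∧ q.1 = c ∧ segment ℝ u q ⊆ M ∧ segment ℝ v q ⊆ M := by
  set t : ℝ := (c - u.1) / (v.1 - u.1) with ht
  have hden : (0:ℝ) < v.1 - u.1 := by linarith
  have ht0 : 0 ≤ t := div_nonneg (by linarith) (by linarith)
  have ht1 : t ≤ 1 := by rw [ht, div_le_one hden]; linarith
  set q : ℝ × ℝ := (1 - t) • u + t • v with hq
  have hqmem : q ∈ segment ℝ u v := ⟨1 - t, t, by linarith, ht0, by ring, rfl⟩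
  refine ⟨q, hseg hqmem, ?_, ?_, ?_⟩
  · show (1 - t) * u.1 + t * v.1 = c
    rw [ht]; field_simp; ring
  · exact ((convex_segment u v).segment_subset (left_mem_segment ℝ u v) hqmem).trans hseg
  · exact ((convex_segment u v).segment_subset (right_mem_segment ℝ u v) hqmem).trans hseg

/-- Vertical visibility: two points of `M` on the same vertical line see each other. -/
lemma vis_vertical (M : Set (ℝ × ℝ)) (hmono : ∀ c : ℝ, Convex ℝ {z ∈ M | z.1 = c})
    (b q : ℝ × ℝ) (hb : b ∈ M) (hq : q ∈ M) (hx : q.1 = b.1) : q ∈ Vis M b := by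
  refine ⟨hq, fun y hy => ((hmono b.1).segment_subset ⟨hb, rfl⟩ ⟨hq, hx⟩ hy).1⟩

/-- Transitivity of visibility disjointness in an x-monotone set. -/
lemma vis_trans (M : Set (ℝ × ℝ)) (hmono : ∀ c : ℝ, Convex ℝ {z ∈ M | z.1 = c})
    (a b c : ℝ × ℝ) (hb : b ∈ M)
    (hab : a.1 < b.1) (hbc : b.1 < c.1)
    (h1 : Vis M a ∩ Vis M b = ∅) (h2 : Vis M b ∩ Vis M c = ∅) :
    Vis M a ∩ Vis M c = ∅ := by
  rw [Set.eq_empty_iff_forall_notMem]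
  rintro z ⟨⟨hzM, hza⟩, ⟨_, hzc⟩⟩
  rw [Set.eq_empty_iff_forall_notMem] at h1 h2
  rcases lt_trichotomy z.1 b.1 with hlt | heq | hgt
  · -- segment [z,c] crosses the vertical line x = b.1
    obtain ⟨q, hqM, hq1, hqz, hqc⟩ :=
      exists_on_segment M z c (by rwa [segment_symm]) b.1 hlt hbc
    exact h2 q ⟨vis_vertical M hmono b q hb hqM hq1, ⟨hqM, hqc⟩⟩
  · exact h1 z ⟨⟨hzM, hza⟩, vis_vertical M hmono b z hb hzM heq⟩
  · -- segment [a,z] crosses the vertical line x = b.1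
    obtain ⟨q, hqM, hq1, hqa, hqz⟩ :=
      exists_on_segment M a z hza b.1 hab hgt
    exact h1 q ⟨⟨hqM, hqa⟩, vis_vertical M hmono b q hb hqM hq1⟩

/-- Let `W = {w_1, …, w_k}` be a witness set of an x-monotone polygon `M`, sorted
by x-coordinate, and `p ∈ M` with `x(w_i) < x(p) < x(w_{i+1})`. If `Vis(p)` is
disjoint from `Vis(w_i)` and from `Vis(w_{i+1})`, then `W ∪ {p}` is a witness set. -/
theorem insert_witness (M : Set (ℝ × ℝ))
    (hmono : ∀ c : ℝ, Convex ℝ {z ∈ M | z.1 = c})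
    (k : ℕ) (w : Fin k → ℝ × ℝ) (hwM : ∀ i, w i ∈ M)
    (hsorted : ∀ i j : Fin k, i < j → (w i).1 < (w j).1)
    (hwitness : ∀ i j : Fin k, i ≠ j → Vis M (w i) ∩ Vis M (w j) = ∅)
    (i : ℕ) (hi : i + 1 < k)
    (p : ℝ × ℝ) (hp : p ∈ M)
    (hx1 : (w ⟨i, by omega⟩).1 < p.1) (hx2 : p.1 < (w ⟨i + 1, hi⟩).1)
    (hd1 : Vis M p ∩ Vis M (w ⟨i, by omega⟩) = ∅)
    (hd2 : Vis M p ∩ Vis M (w ⟨i + 1, hi⟩) = ∅) :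
    (insert p (Set.range w)).Pairwise fun u v => Vis M u ∩ Vis M v = ∅ := by
  have hsymm : Symmetric (fun u v : ℝ × ℝ => Vis M u ∩ Vis M v = ∅) := by
    intro u v h; rwa [Set.inter_comm]
  rw [@Set.pairwise_insert_of_symm _ _ _ _ ⟨fun _ _ h => hsymm h⟩]
  constructor
  · rintro _ ⟨j1, rfl⟩ _ ⟨j2, rfl⟩ hne
    exact hwitness j1 j2 (fun h => hne (by rw [h]))
  · rintro _ ⟨j, rfl⟩ _
    rcases lt_trichotomy (j : ℕ) i with hj | hj | hj
    · -- w j left of w i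
      have hlt : (w j).1 < (w ⟨i, by omega⟩).1 := hsorted j ⟨i, by omega⟩ hj
      have := vis_trans M hmono (w j) (w ⟨i, by omega⟩) p (hwM _) hlt hx1
        (hwitness j ⟨i, by omega⟩ (Fin.ne_of_val_ne (show (j:ℕ) ≠ i by omega)))
        (hsymm hd1)
      exact hsymm this
    · have : j = (⟨i, by omega⟩ : Fin k) := Fin.ext hj
      rw [this]; exact hd1
    · rcases Nat.lt_or_ge (j : ℕ) (i + 1 + 1) with hj2 | hj2
      · have : j = (⟨i + 1, hi⟩ : Fin k) := Fin.ext (show (j:ℕ) = i + 1 by omega)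
        rw [this]; exact hd2
      · have hlt : (w ⟨i + 1, hi⟩).1 < (w j).1 :=
          hsorted ⟨i + 1, hi⟩ j (by rw [Fin.lt_def]; exact hj2)
        exact vis_trans M hmono p (w ⟨i + 1, hi⟩) (w j) (hwM _) hx2 hlt hd2
          (hwitness ⟨i + 1, hi⟩ j (Fin.ne_of_val_ne (show i + 1 ≠ (j:ℕ) by omega)))
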